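/- (Global convergence of the gradient flow.) Let J ∈ ℝ^{N×p}, y ∈ ℝ^N, γ > 0, α > 0. Suppose (θ_t, u_t, v_t) for t ≥ 0 are differentiable curves in ℝ^p × ℝ^N × ℝ^N satisfying the gradient flow θ'_t = −Jᵀ r_t, u'_t = −2α u_t ⊙ r_t, v'_t = 2α v_t ⊙ r_t, where r_t = Jθ_t + u_t⊙u_t − v_t⊙v_t − y, with initialization θ₀ = 0, u₀ = γ·1, v₀ = γ·1 (all entries γ). If the limit (θ_∞, u_∞, v_∞) = lim_{t→∞} (θ_t, u_t, v_t) exists, then (θ_∞, u_∞, v_∞) is a global minimizer of h(θ, u, v) = (1/2)‖Jθ + u⊙u − v⊙v − y‖₂²; in particular J θ_∞ + u_∞⊙u_∞ − v_∞⊙v_∞ = y. -/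

import Mathlib

open Filter Topology

/-- Global convergence of the gradient flow: if the curves
`(θ_t, u_t, v_t)` follow the gradient flow
`θ' = −Jᵀr`, `u' = −2α u⊙r`, `v' = 2α v⊙r` with `r = Jθ + u⊙u − v⊙v − y`,
initialized at `θ₀ = 0`, `u₀ = v₀ = γ·1`, and the limit `(θ∞, u∞, v∞)` as
`t → ∞` exists, then the limit is a global minimizer of
`h(θ,u,v) = (1/2)‖Jθ + u⊙u − v⊙v − y‖₂²`; in particular its residual is zero. -/
theorem stmt_11 (N p : ℕ) (J : Matrix (Fin N) (Fin p) ℝ) (y : Fin N → ℝ)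
    (γ α : ℝ) (hγ : 0 < γ) (hα : 0 < α)
    (θ : ℝ → Fin p → ℝ) (u v : ℝ → Fin N → ℝ) (r : ℝ → Fin N → ℝ)
    (hrdef : ∀ t : ℝ, r t = fun i =>
      J.mulVec (θ t) i + u t i * u t i - v t i * v t i - y i)
    (hθ' : ∀ t : ℝ, 0 ≤ t → HasDerivAt θ (-(J.transpose.mulVec (r t))) t)
    (hu' : ∀ t : ℝ, 0 ≤ t →
      HasDerivAt u (fun i => -(2 * α) * (u t i * r t i)) t)
    (hv' : ∀ t : ℝ, 0 ≤ t →
      HasDerivAt v (fun i => (2 * α) * (v t i * r t i)) t)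
    (hθ0 : θ 0 = 0) (hu0 : u 0 = fun _ => γ) (hv0 : v 0 = fun _ => γ)
    (θinf : Fin p → ℝ) (uinf vinf : Fin N → ℝ)
    (hlim : Tendsto (fun t => (θ t, u t, v t)) atTop (𝓝 (θinf, uinf, vinf))) :
    (∀ (θ' : Fin p → ℝ) (u' v' : Fin N → ℝ),
      (1 / 2) * ∑ i, (J.mulVec θinf i + uinf i * uinf i - vinf i * vinf i - y i) ^ 2 ≤
      (1 / 2) * ∑ i, (J.mulVec θ' i + u' i * u' i - v' i * v' i - y i) ^ 2) ∧
    (fun i => J.mulVec θinf i + uinf i * uinf i - vinf i * vinf i) = y := by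
  -- componentwise derivatives
  have hui : ∀ t : ℝ, 0 ≤ t → ∀ i, HasDerivAt (fun s => u s i)
      (-(2 * α) * (u t i * r t i)) t := fun t ht i => (hasDerivAt_pi.1 (hu' t ht)) i
  have hvi : ∀ t : ℝ, 0 ≤ t → ∀ i, HasDerivAt (fun s => v s i)
      ((2 * α) * (v t i * r t i)) t := fun t ht i => (hasDerivAt_pi.1 (hv' t ht)) i
  have hθj : ∀ t : ℝ, 0 ≤ t → ∀ j, HasDerivAt (fun s => θ s j)
      ((-(J.transpose.mulVec (r t))) j) t := fun t ht j => (hasDerivAt_pi.1 (hθ' t ht)) j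
  -- conservation: u t i * v t i = γ * γ for t ≥ 0
  have huv : ∀ t : ℝ, 0 ≤ t → ∀ i, u t i * v t i = γ * γ := by
    intro T hT i
    have hf : ∀ x ∈ Set.Ici (0:ℝ), HasDerivAt (fun s => u s i * v s i) 0 x := by
      intro x hx
      have h : HasDerivAt (fun s => u s i * v s i) _ x := (hui x hx i).fun_mul (hvi x hx i)
      convert h using 1
      ring
    have hconst := constant_of_has_deriv_right_zero
      (f := fun s => u s i * v s i) (a := 0) (b := T)
      (fun x hx => ((hf x hx.1).continuousAt).continuousWithinAt)
      (fun x hx => (hf x hx.1).hasDerivWithinAt)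
    have := hconst T ⟨hT, le_refl T⟩
    simpa [hu0, hv0] using this
  -- derivative of residual components
  set R : ℝ → Fin N → ℝ := fun t i =>
    J.mulVec (-(J.transpose.mulVec (r t))) i
      - (4 * α) * ((u t i) ^ 2 + (v t i) ^ 2) * r t i with hR
  have hri : ∀ t : ℝ, 0 ≤ t → ∀ i, HasDerivAt (fun s => r s i) (R t i) t := by
    intro t ht i
    have e : (fun s => r s i) = fun s =>
        (∑ j, J i j * θ s j) + u s i * u s i - v s i * v s i - y i := by
      funext s
      rw [hrdef]
      simp [Matrix.mulVec, dotProduct]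
    rw [e]
    have hA : HasDerivAt (fun s => ∑ j, J i j * θ s j)
        (∑ j, J i j * (-(J.transpose.mulVec (r t))) j) t :=
      HasDerivAt.fun_sum fun j _ => (hθj t ht j).const_mul (J i j)
    have hU : HasDerivAt (fun s => u s i * u s i) _ t := (hui t ht i).fun_mul (hui t ht i)
    have hV : HasDerivAt (fun s => v s i * v s i) _ t := (hvi t ht i).fun_mul (hvi t ht i)
    have := ((hA.add hU).sub hV).sub_const (y i)
    refine this.congr_deriv ?_
    simp [hR, Matrix.mulVec, dotProduct]
    ring
  -- energy g and its derivative G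
  set g : ℝ → ℝ := fun t => ∑ i, (r t i) ^ 2 with hgdef
  set G : ℝ → ℝ := fun t => ∑ i, 2 * r t i * R t i with hGdef
  have hg' : ∀ t : ℝ, 0 ≤ t → HasDerivAt g (G t) t := by
    intro t ht
    apply HasDerivAt.fun_sum
    intro i _
    have : HasDerivAt (fun s => r s i ^ 2) _ t := (hri t ht i).fun_pow 2
    refine this.congr_deriv ?_
    ring
  have hgnonneg : ∀ t : ℝ, 0 ≤ g t := fun t =>
    Finset.sum_nonneg fun i _ => sq_nonneg _
  set K : ℝ := 16 * α * γ ^ 2 with hK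
  have hKpos : 0 < K := by positivity
  -- the key differential inequality
  have hGle : ∀ t : ℝ, 0 ≤ t → G t ≤ -K * g t := by
    intro t ht
    have hsplit : G t = (∑ i, 2 * r t i * J.mulVec (-(J.transpose.mulVec (r t))) i)
        + ∑ i, (-(8 * α)) * ((u t i) ^ 2 + (v t i) ^ 2) * (r t i) ^ 2 := by
      rw [hGdef, ← Finset.sum_add_distrib]
      apply Finset.sum_congr rfl
      intro i _
      simp only [hR]
      ring
    have h1 : (∑ i, 2 * r t i * J.mulVec (-(J.transpose.mulVec (r t))) i) ≤ 0 := by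
      have e1 : (∑ i, 2 * r t i * J.mulVec (-(J.transpose.mulVec (r t))) i)
          = 2 * dotProduct (r t) (J.mulVec (-(J.transpose.mulVec (r t)))) := by
        simp only [dotProduct, Finset.mul_sum]
        apply Finset.sum_congr rfl
        intro i _
        ring
      rw [e1, Matrix.dotProduct_mulVec, ← Matrix.mulVec_transpose]
      have e2 : dotProduct (J.transpose.mulVec (r t)) (-(J.transpose.mulVec (r t)))
          = -(∑ j, (J.transpose.mulVec (r t) j) ^ 2) := by
        simp [dotProduct, sq, Finset.sum_neg_distrib]
      rw [e2]
      have : (0:ℝ) ≤ ∑ j, (J.transpose.mulVec (r t) j) ^ 2 :=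
        Finset.sum_nonneg fun j _ => sq_nonneg _
      linarith
    have h2 : (∑ i, (-(8 * α)) * ((u t i) ^ 2 + (v t i) ^ 2) * (r t i) ^ 2)
        ≤ ∑ i, -K * (r t i) ^ 2 := by
      apply Finset.sum_le_sum
      intro i _
      have huvi := huv t ht i
      have hsq : 2 * (γ * γ) ≤ (u t i) ^ 2 + (v t i) ^ 2 := by
        nlinarith [sq_nonneg (u t i - v t i)]
      have hr2 : (0:ℝ) ≤ (r t i) ^ 2 := sq_nonneg _
      rw [hK]
      nlinarith [mul_nonneg hα.le hr2]
    calc G t ≤ 0 + ∑ i, -K * (r t i) ^ 2 := by rw [hsplit]; exact add_le_add h1 h2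
      _ = -K * g t := by rw [zero_add, hgdef, Finset.mul_sum]
  -- Grönwall: F t = g t * exp (K t) is antitone on [0, ∞)
  set F : ℝ → ℝ := fun t => g t * Real.exp (K * t) with hF
  have hF' : ∀ t : ℝ, 0 ≤ t →
      HasDerivAt F ((G t + K * g t) * Real.exp (K * t)) t := by
    intro t ht
    have hexp : HasDerivAt (fun s => Real.exp (K * s)) (Real.exp (K * t) * K) t := by
      have := ((hasDerivAt_id t).const_mul K).exp
      simpa using this
    have : HasDerivAt (fun s => g s * Real.exp (K * s)) _ t := (hg' t ht).fun_mul hexp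
    convert this using 1
    ring
  have hanti : AntitoneOn F (Set.Ici (0:ℝ)) := by
    apply antitoneOn_of_deriv_nonpos (convex_Ici 0)
    · exact fun x hx => ((hF' x hx).continuousAt).continuousWithinAt
    · intro x hx
      rw [interior_Ici] at hx
      exact ((hF' x (le_of_lt hx)).differentiableAt).differentiableWithinAt
    · intro x hx
      rw [interior_Ici] at hx
      rw [(hF' x (le_of_lt hx)).deriv]
      apply mul_nonpos_of_nonpos_of_nonneg
      · have := hGle x (le_of_lt hx)
        linarith
      · exact (Real.exp_pos _).le
  have hbound : ∀ t : ℝ, 0 ≤ t → g t ≤ g 0 * (Real.exp (K * t))⁻¹ := by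
    intro t ht
    have h := hanti (Set.self_mem_Ici) (Set.mem_Ici.2 ht) ht
    have hF0 : F 0 = g 0 := by simp [hF]
    have hFt : F t = g t * Real.exp (K * t) := rfl
    rw [hF0, hFt] at h
    rw [← le_div_iff₀ (Real.exp_pos _)] at h
    simpa [div_eq_mul_inv] using h
  -- g tends to 0
  have hgto0 : Tendsto g atTop (𝓝 0) := by
    have hub : Tendsto (fun t => g 0 * (Real.exp (K * t))⁻¹) atTop (𝓝 0) := by
      have h1 : Tendsto (fun t : ℝ => K * t) atTop atTop :=
        Tendsto.const_mul_atTop hKpos tendsto_id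
      have h2 : Tendsto (fun t => (Real.exp (K * t))⁻¹) atTop (𝓝 0) :=
        Tendsto.comp tendsto_inv_atTop_zero (Real.tendsto_exp_atTop.comp h1)
      simpa using h2.const_mul (g 0)
    refine tendsto_of_tendsto_of_tendsto_of_le_of_le' tendsto_const_nhds hub ?_ ?_
    · exact Eventually.of_forall fun t => hgnonneg t
    · filter_upwards [eventually_ge_atTop (0:ℝ)] with t ht
      exact hbound t ht
  -- limit of g from convergence of trajectories
  set rinf : Fin N → ℝ := fun i =>
    J.mulVec θinf i + uinf i * uinf i - vinf i * vinf i - y i with hrinf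
  have hθlim : Tendsto θ atTop (𝓝 θinf) := by
    have := (continuous_fst.tendsto (θinf, uinf, vinf)).comp hlim
    exact this
  have hulim : Tendsto u atTop (𝓝 uinf) := by
    have := ((continuous_fst.comp continuous_snd).tendsto (θinf, uinf, vinf)).comp hlim
    exact this
  have hvlim : Tendsto v atTop (𝓝 vinf) := by
    have := ((continuous_snd.comp continuous_snd).tendsto (θinf, uinf, vinf)).comp hlim
    exact this
  have hglim : Tendsto g atTop (𝓝 (∑ i, (rinf i) ^ 2)) := by
    apply tendsto_finset_sum
    intro i _
    have hri' : Tendsto (fun t => r t i) atTop (𝓝 (rinf i)) := by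
      have hθi : Tendsto (fun t => J.mulVec (θ t) i) atTop (𝓝 (J.mulVec θinf i)) := by
        have e : ∀ w : Fin p → ℝ, J.mulVec w i = ∑ j, J i j * w j := by
          intro w; simp [Matrix.mulVec, dotProduct]
        simp only [e]
        apply tendsto_finset_sum
        intro j _
        exact (((continuous_apply j).tendsto θinf).comp hθlim).const_mul (J i j)
      have hu2 : Tendsto (fun t => u t i) atTop (𝓝 (uinf i)) :=
        ((continuous_apply i).tendsto uinf).comp hulim
      have hv2 : Tendsto (fun t => v t i) atTop (𝓝 (vinf i)) :=
        ((continuous_apply i).tendsto vinf).comp hvlim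
      have : Tendsto (fun t => J.mulVec (θ t) i + u t i * u t i
          - v t i * v t i - y i) atTop (𝓝 (rinf i)) :=
        (((hθi.add (hu2.mul hu2)).sub (hv2.mul hv2)).sub tendsto_const_nhds)
      refine this.congr fun t => ?_
      rw [hrdef]
    exact hri'.pow 2
  have hsum0 : (∑ i, (rinf i) ^ 2) = 0 := tendsto_nhds_unique hglim hgto0
  have hrinf0 : ∀ i, rinf i = 0 := by
    intro i
    have := (Finset.sum_eq_zero_iff_of_nonneg
      (fun i _ => sq_nonneg (rinf i))).1 hsum0 i (Finset.mem_univ i)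
    exact pow_eq_zero_iff (by norm_num) |>.1 this
  constructor
  · intro θ' u' v'
    have hL : (∑ i, (J.mulVec θinf i + uinf i * uinf i - vinf i * vinf i - y i) ^ 2) = 0 :=
      hsum0
    rw [hL]
    have : (0:ℝ) ≤ ∑ i, (J.mulVec θ' i + u' i * u' i - v' i * v' i - y i) ^ 2 :=
      Finset.sum_nonneg fun i _ => sq_nonneg _
    linarith
  · funext i
    have := hrinf0 i
    simp only [hrinf] at this
    linarith
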